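/- A Boolean relation R ⊆ {0,1}^k is bijunctive (equivalent to a 2-CNF) if and only if R is closed under the coordinatewise majority operation: for all a, b, c ∈ R, the tuple maj(a,b,c) with i-th coordinate majority(a_i, b_i, c_i) is in R. -/
import Mathlib


structure Clause (k : ℕ) where
  pos : Finset (Fin k)
  neg : Finset (Fin k)

def Clause.Sat {k : ℕ} (C : Clause k) (a : Fin k → Bool) : Prop :=
  (∃ i ∈ C.pos, a i = true) ∨ (∃ i ∈ C.neg, a i = false)

/-- `majority x y z` is true iff at least two of `x, y, z` are true. -/
def maj (x y z : Bool) : Bool := (x && y) || (x && z) || (y && z)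

lemma maj_two_true : ∀ (x y : Fin 3), x ≠ y → ∀ a b c : Bool,
    ![a,b,c] x = true → ![a,b,c] y = true → maj a b c = true := by decide

lemma maj_two_false : ∀ (x y : Fin 3), x ≠ y → ∀ a b c : Bool,
    ![a,b,c] x = false → ![a,b,c] y = false → maj a b c = false := by decide

lemma maj_eq₁ : ∀ u v : Bool, maj v v u = v := by decide
lemma maj_eq₂ : ∀ u v : Bool, maj v u v = v := by decide
lemma maj_eq₃ : ∀ u v : Bool, maj u v v = v := by decide

lemma vec_apply {α β : Type*} (a b c : α → β) (x : Fin 3) (i : α) :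
    ![a,b,c] x i = ![a i, b i, c i] x := by
  fin_cases x <;> simp

/-- A Boolean relation `R ⊆ {0,1}^k` is bijunctive (the satisfying set of a 2-CNF)
iff it is closed under the coordinatewise majority operation. -/
theorem bijunctive_iff_closed_majority {k : ℕ} (R : Set (Fin k → Bool)) :
    (∃ φ : List (Clause k), (∀ C ∈ φ, C.pos.card + C.neg.card ≤ 2) ∧
        ∀ a : Fin k → Bool, a ∈ R ↔ ∀ C ∈ φ, C.Sat a) ↔
    (∀ a ∈ R, ∀ b ∈ R, ∀ c ∈ R, (fun i => maj (a i) (b i) (c i)) ∈ R) := by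
  classical
  constructor
  · rintro ⟨φ, hcard, hiff⟩ a ha b hb c hc
    rw [hiff]
    intro C hC
    have hsat : ∀ x : Fin 3, C.Sat (![a,b,c] x) := by
      intro x
      fin_cases x
      · exact (hiff a).1 ha C hC
      · exact (hiff b).1 hb C hC
      · exact (hiff c).1 hc C hC
    have key : ∀ x : Fin 3, ∃ l, l ∈ C.pos.disjSum C.neg ∧
        Sum.elim (fun i => ![a,b,c] x i = true) (fun i => ![a,b,c] x i = false) l := by
      intro x
      rcases hsat x with ⟨i, hi, h⟩ | ⟨i, hi, h⟩
      · exact ⟨Sum.inl i, Finset.inl_mem_disjSum.2 hi, h⟩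
      · exact ⟨Sum.inr i, Finset.inr_mem_disjSum.2 hi, h⟩
    choose w hw hprop using key
    have hmap : ∀ x ∈ (Finset.univ : Finset (Fin 3)), w x ∈ C.pos.disjSum C.neg :=
      fun x _ => hw x
    have hlt : (C.pos.disjSum C.neg).card < (Finset.univ : Finset (Fin 3)).card := by
      rw [Finset.card_disjSum]
      have := hcard C hC
      simp only [Finset.card_univ, Fintype.card_fin]
      omega
    obtain ⟨x, -, y, -, hxy, hxyeq⟩ := Finset.exists_ne_map_eq_of_card_lt_of_maps_to hlt hmap
    have hpx := hprop x
    have hpy := hprop y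
    rw [hxyeq] at hpx
    cases hwy : w y with
    | inl i =>
      rw [hwy] at hpx hpy
      simp only [Sum.elim_inl] at hpx hpy
      rw [vec_apply] at hpx hpy
      left
      refine ⟨i, Finset.inl_mem_disjSum.1 (hwy ▸ hw y), ?_⟩
      exact maj_two_true x y hxy _ _ _ hpx hpy
    | inr i =>
      rw [hwy] at hpx hpy
      simp only [Sum.elim_inr] at hpx hpy
      rw [vec_apply] at hpx hpy
      right
      refine ⟨i, Finset.inr_mem_disjSum.1 (hwy ▸ hw y), ?_⟩
      exact maj_two_false x y hxy _ _ _ hpx hpy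
  · intro hmaj
    refine ⟨((Finset.univ : Finset (Finset (Fin k) × Finset (Fin k))).filter
        (fun p => p.1.card + p.2.card ≤ 2 ∧ ∀ b ∈ R, Clause.Sat ⟨p.1, p.2⟩ b)).toList.map
        (fun p => Clause.mk p.1 p.2), ?_, ?_⟩
    · intro C hC
      simp only [List.mem_map, Finset.mem_toList, Finset.mem_filter] at hC
      obtain ⟨p, ⟨-, hp1, -⟩, rfl⟩ := hC
      exact hp1
    · intro a
      constructor
      · intro ha C hC
        simp only [List.mem_map, Finset.mem_toList, Finset.mem_filter] at hC
        obtain ⟨p, ⟨-, -, hp2⟩, rfl⟩ := hC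
        exact hp2 a ha
      · intro ha
        have hmem : ∀ C : Clause k, C.pos.card + C.neg.card ≤ 2 → (∀ b ∈ R, C.Sat b) →
            C.Sat a := by
          intro C h1 h2
          apply ha
          simp only [List.mem_map, Finset.mem_toList, Finset.mem_filter]
          exact ⟨(C.pos, C.neg), ⟨Finset.mem_univ _, h1, h2⟩, rfl⟩
        have hne : R.Nonempty := by
          by_contra h
          rw [Set.not_nonempty_iff_eq_empty] at h
          have := hmem ⟨∅, ∅⟩ (by simp) (by simp [h])
          simp [Clause.Sat] at this
        have pair : ∀ i j : Fin k, ∃ b ∈ R, b i = a i ∧ b j = a j := by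
          intro i j
          by_contra h
          push_neg at h
          set C : Clause k := ⟨({i,j} : Finset (Fin k)).filter (fun l => a l = false),
                               ({i,j} : Finset (Fin k)).filter (fun l => a l = true)⟩ with hCdef
          have hc : C.pos.card + C.neg.card ≤ 2 := by
            have hnegeq : C.neg = ({i,j} : Finset (Fin k)).filter (fun l => ¬ a l = false) := by
              apply Finset.filter_congr
              intro l _
              simp
            have h1 : C.pos.card + C.neg.card = ({i,j} : Finset (Fin k)).card := by
              rw [hCdef, hnegeq]
              exact Finset.card_filter_add_card_filter_not
                (s := ({i,j} : Finset (Fin k))) (p := fun l => a l = false)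
            have h2 : ({i,j} : Finset (Fin k)).card ≤ 2 := Finset.card_insert_le _ _ |>.trans (by simp)
            omega
          have hsat : ∀ b ∈ R, C.Sat b := by
            intro b hb
            by_contra hns
            unfold Clause.Sat at hns
            push_neg at hns
            obtain ⟨hns1, hns2⟩ := hns
            have hagree : ∀ l ∈ ({i,j} : Finset (Fin k)), b l = a l := by
              intro l hl
              cases hal : a l with
              | false =>
                have := hns1 l (Finset.mem_filter.2 ⟨hl, hal⟩)
                simp [Bool.not_eq_true] at this
                rw [this]
              | true =>
                have := hns2 l (Finset.mem_filter.2 ⟨hl, hal⟩)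
                simp [Bool.not_eq_false] at this
                rw [this]
            exact h b hb (hagree i (by simp)) (hagree j (by simp))
          have hCa := hmem C hc hsat
          rcases hCa with ⟨l, hl, h1⟩ | ⟨l, hl, h1⟩ <;>
            · rw [Finset.mem_filter] at hl
              rw [hl.2] at h1
              exact absurd h1 (by simp)
        have base : ∀ S : Finset (Fin k), S.card ≤ 2 → ∃ b ∈ R, ∀ l ∈ S, b l = a l := by
          intro S hS
          obtain h0 | h1 | h2 : S.card = 0 ∨ S.card = 1 ∨ S.card = 2 := by omega
          · rw [Finset.card_eq_zero] at h0
            obtain ⟨b, hb⟩ := hne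
            exact ⟨b, hb, by simp [h0]⟩
          · obtain ⟨x, rfl⟩ := Finset.card_eq_one.1 h1
            obtain ⟨b, hbR, hbx, -⟩ := pair x x
            refine ⟨b, hbR, ?_⟩
            intro l hl
            rw [Finset.mem_singleton] at hl
            subst hl; exact hbx
          · obtain ⟨x, y, hxy, rfl⟩ := Finset.card_eq_two.1 h2
            obtain ⟨b, hbR, hbx, hby⟩ := pair x y
            refine ⟨b, hbR, ?_⟩
            intro l hl
            rcases Finset.mem_insert.1 hl with rfl | hl
            · exact hbx
            · rw [Finset.mem_singleton] at hl; subst hl; exact hby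
        have main : ∀ n (S : Finset (Fin k)), S.card ≤ n → ∃ b ∈ R, ∀ l ∈ S, b l = a l := by
          intro n
          induction n with
          | zero => intro S hS; exact base S (by omega)
          | succ n ih =>
            intro S hS
            by_cases h2 : S.card ≤ 2
            · exact base S h2
            · push_neg at h2
              obtain ⟨x, hx⟩ := Finset.card_pos.1 (by omega : 0 < S.card)
              set S' := S.erase x with hS'def
              have hS'card : S'.card = S.card - 1 := Finset.card_erase_of_mem hx
              obtain ⟨i, hi⟩ : S'.Nonempty := Finset.card_pos.1 (by omega)
              obtain ⟨j, hj⟩ : (S'.erase i).Nonempty := Finset.card_pos.1 (by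
                rw [Finset.card_erase_of_mem hi]; omega)
              have hji : j ≠ i := (Finset.mem_erase.1 hj).1
              have hjS' : j ∈ S' := (Finset.mem_erase.1 hj).2
              obtain ⟨b1, hb1R, hb1⟩ := ih S' (by omega)
              obtain ⟨b2, hb2R, hb2⟩ := ih (insert x (S'.erase i)) (by
                have h := Finset.card_insert_le x (S'.erase i)
                rw [Finset.card_erase_of_mem hi] at h
                omega)
              obtain ⟨b3, hb3R, hb3⟩ := ih (insert x (S'.erase j)) (by
                have h := Finset.card_insert_le x (S'.erase j)
                rw [Finset.card_erase_of_mem hjS'] at h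
                omega)
              refine ⟨fun l => maj (b1 l) (b2 l) (b3 l), hmaj _ hb1R _ hb2R _ hb3R, ?_⟩
              intro l hl
              show maj (b1 l) (b2 l) (b3 l) = a l
              by_cases hlx : l = x
              · subst hlx
                rw [hb2 _ (Finset.mem_insert_self _ _), hb3 _ (Finset.mem_insert_self _ _)]
                exact maj_eq₃ _ _
              · have hlS' : l ∈ S' := Finset.mem_erase.2 ⟨hlx, hl⟩
                have h1 := hb1 l hlS'
                by_cases hli : l = i
                · subst hli
                  have h3 := hb3 l (Finset.mem_insert_of_mem
                    (Finset.mem_erase.2 ⟨fun hh => hji hh.symm, hlS'⟩))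
                  rw [h1, h3]
                  exact maj_eq₂ _ _
                · have h2' := hb2 l (Finset.mem_insert_of_mem (Finset.mem_erase.2 ⟨hli, hlS'⟩))
                  rw [h1, h2']
                  exact maj_eq₁ _ _
        obtain ⟨b, hbR, hb⟩ := main (Finset.univ : Finset (Fin k)).card Finset.univ le_rfl
        have : a = b := funext fun l => (hb l (Finset.mem_univ l)).symm
        rw [this]
        exact hbR
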